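/- Let A be an invertible three-level sparse matrix built from blocks A₁₁, A₁₂,ᵢ, A₁₂,ᵢⱼ, A₂₂,ᵢ, A₁₂,(i),(j), A₂₂,ᵢⱼ, suppose each A₂₂,ᵢⱼ is invertible and each H₂₂,ᵢ is invertible. Then the p×p matrix A₁₁ − Σ_{i=1}^m Σ_{j=1}^{nᵢ} A₁₂,ᵢⱼ A₂₂,ᵢⱼ⁻¹ A₁₂,ᵢⱼᵀ − Σ_{i=1}^m H₁₂,ᵢ H₂₂,ᵢ⁻¹ H₁₂,ᵢᵀ is invertible and the sub-block A¹¹ of A⁻¹ equals its inverse. -/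

import Mathlib

open Matrix

/-- The three-level sparse matrix built from blocks `A11`, `A12 i` (level 1–2),
`A12' i j` (level 1–3), `A22 i` (level-2 diagonal), `A12'' i j` (level 2–3) and
`A22' i j` (level-3 diagonal). -/
def threeLevelSparse {p q₁ q₂ m : ℕ} {n : Fin m → ℕ}
    (A11 : Matrix (Fin p) (Fin p) ℝ)
    (A12 : (i : Fin m) → Matrix (Fin p) (Fin q₁) ℝ)
    (A12' : (i : Fin m) → Fin (n i) → Matrix (Fin p) (Fin q₂) ℝ)
    (A22 : (i : Fin m) → Matrix (Fin q₁) (Fin q₁) ℝ)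
    (A12'' : (i : Fin m) → Fin (n i) → Matrix (Fin q₁) (Fin q₂) ℝ)
    (A22' : (i : Fin m) → Fin (n i) → Matrix (Fin q₂) (Fin q₂) ℝ) :
    Matrix (Fin p ⊕ (Σ i : Fin m, Fin q₁ ⊕ (Fin (n i) × Fin q₂)))
           (Fin p ⊕ (Σ i : Fin m, Fin q₁ ⊕ (Fin (n i) × Fin q₂))) ℝ :=
  Matrix.of fun x y =>
    match x, y with
    | Sum.inl a, Sum.inl b => A11 a b
    | Sum.inl a, Sum.inr ⟨i, Sum.inl b⟩ => A12 i a b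
    | Sum.inl a, Sum.inr ⟨i, Sum.inr (j, b)⟩ => A12' i j a b
    | Sum.inr ⟨i, Sum.inl a⟩, Sum.inl b => A12 i b a
    | Sum.inr ⟨i, Sum.inr (j, a)⟩, Sum.inl b => A12' i j b a
    | Sum.inr ⟨i, Sum.inl a⟩, Sum.inr ⟨i', Sum.inl b⟩ =>
        if i = i' then A22 i a b else 0
    | Sum.inr ⟨i, Sum.inl a⟩, Sum.inr ⟨i', Sum.inr (j, b)⟩ =>
        if i = i' then A12'' i' j a b else 0
    | Sum.inr ⟨i, Sum.inr (j, a)⟩, Sum.inr ⟨i', Sum.inl b⟩ =>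
        if i = i' then A12'' i j b a else 0
    | Sum.inr ⟨i, Sum.inr (j, a)⟩, Sum.inr ⟨i', Sum.inr (j', b)⟩ =>
        if (⟨i, j⟩ : Σ i, Fin (n i)) = ⟨i', j'⟩ then A22' i' j' a b else 0

/-- `H₁₂,ᵢ := A₁₂,ᵢ − Σⱼ A₁₂,ᵢⱼ A₂₂,ᵢⱼ⁻¹ A₁₂,(i),(j)ᵀ`. -/
noncomputable def H12 {p q₁ q₂ m : ℕ} {n : Fin m → ℕ}
    (A12 : (i : Fin m) → Matrix (Fin p) (Fin q₁) ℝ)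
    (A12' : (i : Fin m) → Fin (n i) → Matrix (Fin p) (Fin q₂) ℝ)
    (A12'' : (i : Fin m) → Fin (n i) → Matrix (Fin q₁) (Fin q₂) ℝ)
    (A22' : (i : Fin m) → Fin (n i) → Matrix (Fin q₂) (Fin q₂) ℝ)
    (i : Fin m) : Matrix (Fin p) (Fin q₁) ℝ :=
  A12 i - ∑ j, A12' i j * (A22' i j)⁻¹ * (A12'' i j)ᵀ

/-- `H₂₂,ᵢ := A₂₂,ᵢ − Σⱼ A₁₂,(i),(j) A₂₂,ᵢⱼ⁻¹ A₁₂,(i),(j)ᵀ`. -/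
noncomputable def H22 {q₁ q₂ m : ℕ} {n : Fin m → ℕ}
    (A22 : (i : Fin m) → Matrix (Fin q₁) (Fin q₁) ℝ)
    (A12'' : (i : Fin m) → Fin (n i) → Matrix (Fin q₁) (Fin q₂) ℝ)
    (A22' : (i : Fin m) → Fin (n i) → Matrix (Fin q₂) (Fin q₂) ℝ)
    (i : Fin m) : Matrix (Fin q₁) (Fin q₁) ℝ :=
  A22 i - ∑ j, A12'' i j * (A22' i j)⁻¹ * (A12'' i j)ᵀ


namespace ThreeLevelAux

set_option linter.unusedSectionVars false

variable {α β ν κ : Type*} [Fintype ν] [DecidableEq ν] [Fintype κ] [DecidableEq κ]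

def diagP (M : ν → Matrix κ κ ℝ) : Matrix (ν × κ) (ν × κ) ℝ :=
  Matrix.of fun x y => if x.1 = y.1 then M x.1 x.2 y.2 else 0

def comb (f : ν → Matrix α κ ℝ) : Matrix α (ν × κ) ℝ :=
  Matrix.of fun a x => f x.1 a x.2

lemma diagP_mul (M N : ν → Matrix κ κ ℝ) :
    diagP M * diagP N = diagP fun j => M j * N j := by
  ext ⟨j, a⟩ ⟨j', b⟩
  simp only [diagP, mul_apply, Fintype.sum_prod_type, Matrix.of_apply, ite_mul, mul_ite,
    zero_mul, mul_zero]
  by_cases h : j = j' <;> simp [h]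

lemma diagP_one : diagP (fun _ : ν => (1 : Matrix κ κ ℝ)) = 1 := by
  ext ⟨j, a⟩ ⟨j', b⟩
  by_cases h : j = j' <;> simp [diagP, one_apply, Prod.ext_iff, h]

lemma diagP_transpose (M : ν → Matrix κ κ ℝ) :
    (diagP M)ᵀ = diagP fun j => (M j)ᵀ := by
  ext ⟨j, a⟩ ⟨j', b⟩
  by_cases h : j = j'
  · subst h; simp [diagP]
  · simp [diagP, h, Ne.symm h]

lemma comb_mul_diagP (f : ν → Matrix α κ ℝ) (M : ν → Matrix κ κ ℝ) :
    comb f * diagP M = comb fun j => f j * M j := by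
  ext a ⟨j', b⟩
  simp [comb, diagP, mul_apply, Fintype.sum_prod_type, mul_ite]

lemma comb_mul_transpose (f : ν → Matrix α κ ℝ) (g : ν → Matrix β κ ℝ) :
    comb f * (comb g)ᵀ = ∑ j, f j * (g j)ᵀ := by
  ext a b
  simp [comb, mul_apply, Fintype.sum_prod_type, Matrix.sum_apply]

section Sigma

variable {T : ν → Type*} [∀ i, Fintype (T i)] [∀ i, DecidableEq (T i)]

def combS (f : (i : ν) → Matrix α (T i) ℝ) : Matrix α (Σ i, T i) ℝ :=
  Matrix.of fun a x => f x.1 a x.2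

lemma combS_mul_blockDiagonal' (f : (i : ν) → Matrix α (T i) ℝ)
    (M : (i : ν) → Matrix (T i) (T i) ℝ) :
    combS f * blockDiagonal' M = combS fun i => f i * M i := by
  ext a ⟨i', y⟩
  rw [mul_apply, ← Finset.univ_sigma_univ, Finset.sum_sigma]
  simp only [combS, Matrix.of_apply, blockDiagonal'_apply]
  rw [Finset.sum_eq_single i']
  · simp [mul_apply]
  · intro i _ hi
    simp [hi]
  · simp

lemma combS_mul_transpose (f : (i : ν) → Matrix α (T i) ℝ) (g : (i : ν) → Matrix β (T i) ℝ) :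
    combS f * (combS g)ᵀ = ∑ i, f i * (g i)ᵀ := by
  ext a b
  rw [mul_apply, ← Finset.univ_sigma_univ, Finset.sum_sigma]
  simp [combS, mul_apply, Matrix.sum_apply]

end Sigma

end ThreeLevelAux

namespace ThreeLevelAux

variable {p q₁ q₂ m : ℕ} {n : Fin m → ℕ}
variable (A11 : Matrix (Fin p) (Fin p) ℝ)
variable (A12 : (i : Fin m) → Matrix (Fin p) (Fin q₁) ℝ)
variable (A12' : (i : Fin m) → Fin (n i) → Matrix (Fin p) (Fin q₂) ℝ)
variable (A22 : (i : Fin m) → Matrix (Fin q₁) (Fin q₁) ℝ)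
variable (A12'' : (i : Fin m) → Fin (n i) → Matrix (Fin q₁) (Fin q₂) ℝ)
variable (A22' : (i : Fin m) → Fin (n i) → Matrix (Fin q₂) (Fin q₂) ℝ)

/-- The level-3 diagonal block of group `i`. -/
def Ei (i : Fin m) : Matrix (Fin (n i) × Fin q₂) (Fin (n i) × Fin q₂) ℝ :=
  diagP (A22' i)

/-- Its inverse. -/
noncomputable def Ei' (i : Fin m) : Matrix (Fin (n i) × Fin q₂) (Fin (n i) × Fin q₂) ℝ :=
  diagP fun j => (A22' i j)⁻¹

/-- The diagonal block of the second level corresponding to group `i`. -/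
def Di (i : Fin m) : Matrix (Fin q₁ ⊕ (Fin (n i) × Fin q₂)) (Fin q₁ ⊕ (Fin (n i) × Fin q₂)) ℝ :=
  fromBlocks (A22 i) (comb (A12'' i)) (comb (A12'' i))ᵀ (Ei A22' i)

/-- Its inverse. -/
noncomputable def Di' (i : Fin m) :
    Matrix (Fin q₁ ⊕ (Fin (n i) × Fin q₂)) (Fin q₁ ⊕ (Fin (n i) × Fin q₂)) ℝ :=
  fromBlocks ((H22 A22 A12'' A22' i)⁻¹)
    (-((H22 A22 A12'' A22' i)⁻¹ * comb (A12'' i) * Ei' A22' i))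
    (-(Ei' A22' i * (comb (A12'' i))ᵀ * (H22 A22 A12'' A22' i)⁻¹))
    (Ei' A22' i + Ei' A22' i * (comb (A12'' i))ᵀ * (H22 A22 A12'' A22' i)⁻¹ *
      comb (A12'' i) * Ei' A22' i)

/-- Top-right block row of the three level matrix, for group `i`. -/
def Ci (i : Fin m) : Matrix (Fin p) (Fin q₁ ⊕ (Fin (n i) × Fin q₂)) ℝ :=
  fromCols (A12 i) (comb (A12' i))

lemma Ei'_mul_Ei (hA22' : ∀ i j, IsUnit (A22' i j).det) (i : Fin m) :
    Ei' A22' i * Ei A22' i = 1 := by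
  rw [Ei, Ei', diagP_mul,
    show (fun j => (A22' i j)⁻¹ * A22' i j) = fun _ => 1 from
      funext fun j => nonsing_inv_mul _ (hA22' i j), diagP_one]

lemma Ei_mul_Ei' (hA22' : ∀ i j, IsUnit (A22' i j).det) (i : Fin m) :
    Ei A22' i * Ei' A22' i = 1 := by
  rw [Ei, Ei', diagP_mul,
    show (fun j => A22' i j * (A22' i j)⁻¹) = fun _ => 1 from
      funext fun j => mul_nonsing_inv _ (hA22' i j), diagP_one]

lemma schur_eq (i : Fin m) :
    A22 i - comb (A12'' i) * Ei' A22' i * (comb (A12'' i))ᵀ = H22 A22 A12'' A22' i := by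
  rw [Ei', comb_mul_diagP, comb_mul_transpose, H22]

lemma Ei'_transpose (hA22'sym : ∀ i j, (A22' i j).IsSymm) (i : Fin m) :
    (Ei' A22' i)ᵀ = Ei' A22' i := by
  have h : (fun j => ((A22' i j)⁻¹)ᵀ) = fun j => (A22' i j)⁻¹ :=
    funext fun j => by rw [transpose_nonsing_inv, (hA22'sym i j).eq]
  rw [Ei', diagP_transpose, h]

lemma H22_transpose (hA22sym : ∀ i, (A22 i).IsSymm) (hA22'sym : ∀ i j, (A22' i j).IsSymm)
    (i : Fin m) : (H22 A22 A12'' A22' i)ᵀ = H22 A22 A12'' A22' i := by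
  have h : ∀ j, (A12'' i j * (A22' i j)⁻¹ * (A12'' i j)ᵀ)ᵀ
      = A12'' i j * (A22' i j)⁻¹ * (A12'' i j)ᵀ := fun j => by
    rw [transpose_mul, transpose_mul, transpose_transpose, transpose_nonsing_inv,
      (hA22'sym i j).eq, Matrix.mul_assoc]
  rw [H22, transpose_sub, (hA22sym i).eq, transpose_sum,
    Finset.sum_congr rfl fun j _ => h j]

lemma group_inv (hA22' : ∀ i j, IsUnit (A22' i j).det)
    (hH22 : ∀ i, IsUnit (H22 A22 A12'' A22' i).det) (i : Fin m) :
    Di A22 A12'' A22' i * Di' A22 A12'' A22' i = 1 ∧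
      Di' A22 A12'' A22' i * Di A22 A12'' A22' i = 1 := by
  letI iE : Invertible (Ei A22' i) :=
    ⟨Ei' A22' i, Ei'_mul_Ei A22' hA22' i, Ei_mul_Ei' A22' hA22' i⟩
  have hinvE : ⅟(Ei A22' i) = Ei' A22' i := rfl
  letI iS : Invertible (A22 i - comb (A12'' i) * ⅟(Ei A22' i) * (comb (A12'' i))ᵀ) :=
    Matrix.invertibleOfIsUnitDet _ (by rw [hinvE, schur_eq]; exact hH22 i)
  letI iD : Invertible (Di A22 A12'' A22' i) := by
    rw [Di]; exact Matrix.fromBlocks₂₂Invertible _ _ _ _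
  have key : ⅟(Di A22 A12'' A22' i) = Di' A22 A12'' A22' i := by
    letI iD2 : Invertible (fromBlocks (A22 i) (comb (A12'' i)) (comb (A12'' i))ᵀ (Ei A22' i)) := by
      rw [← Di]; exact iD
    have : ⅟(Di A22 A12'' A22' i)
        = ⅟(fromBlocks (A22 i) (comb (A12'' i)) (comb (A12'' i))ᵀ (Ei A22' i)) := by
      congr 1 <;> rw [Di]
    rw [this, Matrix.invOf_fromBlocks₂₂_eq, invOf_eq_nonsing_inv
      (A22 i - comb (A12'' i) * ⅟(Ei A22' i) * (comb (A12'' i))ᵀ), hinvE, schur_eq, Di']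
  exact ⟨by rw [← key]; exact mul_invOf_self _, by rw [← key]; exact invOf_mul_self _⟩

lemma group_sandwich (hA22sym : ∀ i, (A22 i).IsSymm) (hA22'sym : ∀ i j, (A22' i j).IsSymm)
    (i : Fin m) :
    Ci A12 A12' i * Di' A22 A12'' A22' i * (Ci A12 A12' i)ᵀ
      = ∑ j, A12' i j * (A22' i j)⁻¹ * (A12' i j)ᵀ
        + H12 A12 A12' A12'' A22' i * (H22 A22 A12'' A22' i)⁻¹ *
            (H12 A12 A12' A12'' A22' i)ᵀ := by
  have hGG : ∑ j, A12' i j * (A22' i j)⁻¹ * (A12' i j)ᵀ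
      = comb (A12' i) * Ei' A22' i * (comb (A12' i))ᵀ := by
    rw [Ei', comb_mul_diagP, comb_mul_transpose]
  have hH12 : H12 A12 A12' A12'' A22' i
      = A12 i - comb (A12' i) * Ei' A22' i * (comb (A12'' i))ᵀ := by
    rw [H12, Ei', comb_mul_diagP, comb_mul_transpose]
  have hKs : ((H22 A22 A12'' A22' i)⁻¹)ᵀ = (H22 A22 A12'' A22' i)⁻¹ := by
    rw [transpose_nonsing_inv, H22_transpose A22 A12'' A22' hA22sym hA22'sym]
  have hEs := Ei'_transpose A22' hA22'sym i
  rw [hGG, hH12, Ci, Di', transpose_fromCols, fromCols_mul_fromBlocks,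
    fromCols_mul_fromRows]
  simp only [transpose_sub, transpose_mul, transpose_transpose, hKs, hEs, Matrix.mul_sub,
    Matrix.sub_mul, Matrix.mul_add, Matrix.add_mul, Matrix.mul_neg, Matrix.neg_mul,
    Matrix.mul_assoc]
  abel

end ThreeLevelAux

namespace ThreeLevelAux

variable {p q₁ q₂ m : ℕ} {n : Fin m → ℕ}
variable (A11 : Matrix (Fin p) (Fin p) ℝ)
variable (A12 : (i : Fin m) → Matrix (Fin p) (Fin q₁) ℝ)
variable (A12' : (i : Fin m) → Fin (n i) → Matrix (Fin p) (Fin q₂) ℝ)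
variable (A22 : (i : Fin m) → Matrix (Fin q₁) (Fin q₁) ℝ)
variable (A12'' : (i : Fin m) → Fin (n i) → Matrix (Fin q₁) (Fin q₂) ℝ)
variable (A22' : (i : Fin m) → Fin (n i) → Matrix (Fin q₂) (Fin q₂) ℝ)

/-- The combined top block row. -/
def Cbig : Matrix (Fin p) (Σ i : Fin m, Fin q₁ ⊕ (Fin (n i) × Fin q₂)) ℝ :=
  combS fun i => Ci A12 A12' i

/-- The combined lower-right block. -/
def Dbig : Matrix (Σ i : Fin m, Fin q₁ ⊕ (Fin (n i) × Fin q₂))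
    (Σ i : Fin m, Fin q₁ ⊕ (Fin (n i) × Fin q₂)) ℝ :=
  blockDiagonal' (Di A22 A12'' A22')

lemma split :
    threeLevelSparse A11 A12 A12' A22 A12'' A22'
      = fromBlocks A11 (Cbig A12 A12') (Cbig A12 A12')ᵀ (Dbig A22 A12'' A22') := by
  ext x y
  rcases x with a | ⟨i, x⟩ <;> rcases y with b | ⟨i', y⟩
  · rfl
  · rcases y with b | ⟨j', b⟩ <;> rfl
  · rcases x with a | ⟨j, a⟩ <;> rfl
  · rcases x with a | ⟨j, a⟩ <;> rcases y with b | ⟨j', b⟩ <;> by_cases h : i = i'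
    · subst h
      simp [threeLevelSparse, Dbig, blockDiagonal'_apply_eq, Di, fromBlocks]
    · simp [threeLevelSparse, h, Dbig, blockDiagonal'_apply]
    · subst h
      simp [threeLevelSparse, Dbig, blockDiagonal'_apply_eq, Di, fromBlocks, comb]
    · simp [threeLevelSparse, h, Dbig, blockDiagonal'_apply]
    · subst h
      simp [threeLevelSparse, Dbig, blockDiagonal'_apply_eq, Di, fromBlocks, comb]
    · simp [threeLevelSparse, h, Dbig, blockDiagonal'_apply]
    · subst h
      by_cases hj : j = j' <;>
        simp [threeLevelSparse, Dbig, blockDiagonal'_apply_eq, Di, Ei, diagP, fromBlocks,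
          Sigma.mk.inj_iff, hj]
    · simp [threeLevelSparse, h, Dbig, blockDiagonal'_apply, Sigma.mk.inj_iff]

end ThreeLevelAux


open ThreeLevelAux in
theorem threeLevel_inverse_block11 {p q₁ q₂ m : ℕ} {n : Fin m → ℕ}
    (hp : 0 < p) (hq₁ : 0 < q₁) (hq₂ : 0 < q₂) (hm : 0 < m) (hn : ∀ i, 0 < n i)
    (A11 : Matrix (Fin p) (Fin p) ℝ)
    (A12 : (i : Fin m) → Matrix (Fin p) (Fin q₁) ℝ)
    (A12' : (i : Fin m) → Fin (n i) → Matrix (Fin p) (Fin q₂) ℝ)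
    (A22 : (i : Fin m) → Matrix (Fin q₁) (Fin q₁) ℝ)
    (A12'' : (i : Fin m) → Fin (n i) → Matrix (Fin q₁) (Fin q₂) ℝ)
    (A22' : (i : Fin m) → Fin (n i) → Matrix (Fin q₂) (Fin q₂) ℝ)
    (hA11sym : A11.IsSymm) (hA22sym : ∀ i, (A22 i).IsSymm)
    (hA22'sym : ∀ i j, (A22' i j).IsSymm)
    (hA : IsUnit (threeLevelSparse A11 A12 A12' A22 A12'' A22').det)
    (hA22' : ∀ i j, IsUnit (A22' i j).det)
    (hH22 : ∀ i, IsUnit (H22 A22 A12'' A22' i).det)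
    :
    IsUnit (A11 - ∑ i, ∑ j, A12' i j * (A22' i j)⁻¹ * (A12' i j)ᵀ
        - ∑ i, H12 A12 A12' A12'' A22' i * (H22 A22 A12'' A22' i)⁻¹ *
            (H12 A12 A12' A12'' A22' i)ᵀ).det ∧
      (threeLevelSparse A11 A12 A12' A22 A12'' A22')⁻¹.submatrix Sum.inl Sum.inl =
        (A11 - ∑ i, ∑ j, A12' i j * (A22' i j)⁻¹ * (A12' i j)ᵀ
          - ∑ i, H12 A12 A12' A12'' A22' i * (H22 A22 A12'' A22' i)⁻¹ *
              (H12 A12 A12' A12'' A22' i)ᵀ)⁻¹ := by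
  classical
  letI iDbig : Invertible (Dbig A22 A12'' A22') :=
    ⟨blockDiagonal' (Di' A22 A12'' A22'),
     by
      rw [Dbig, ← blockDiagonal'_mul,
        show (fun i => Di' A22 A12'' A22' i * Di A22 A12'' A22' i)
            = fun _ => 1 from funext fun i => (group_inv A22 A12'' A22' hA22' hH22 i).2]
      exact blockDiagonal'_one,
     by
      rw [Dbig, ← blockDiagonal'_mul,
        show (fun i => Di A22 A12'' A22' i * Di' A22 A12'' A22' i)
            = fun _ => 1 from funext fun i => (group_inv A22 A12'' A22' hA22' hH22 i).1]
      exact blockDiagonal'_one⟩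
  have hinvD : ⅟(Dbig A22 A12'' A22') = blockDiagonal' (Di' A22 A12'' A22') := rfl
  letI iA : Invertible
      (fromBlocks A11 (Cbig A12 A12') (Cbig A12 A12')ᵀ (Dbig A22 A12'' A22')) :=
    Matrix.invertibleOfIsUnitDet _ (by rw [← split]; exact hA)
  letI iS : Invertible
      (A11 - Cbig A12 A12' * ⅟(Dbig A22 A12'' A22') * (Cbig A12 A12')ᵀ) :=
    Matrix.invertibleOfFromBlocks₂₂Invertible _ _ _ _
  have hsand : Cbig A12 A12' * ⅟(Dbig A22 A12'' A22') * (Cbig A12 A12')ᵀ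
      = (∑ i, ∑ j, A12' i j * (A22' i j)⁻¹ * (A12' i j)ᵀ)
        + ∑ i, H12 A12 A12' A12'' A22' i * (H22 A22 A12'' A22' i)⁻¹ *
            (H12 A12 A12' A12'' A22' i)ᵀ := by
    rw [hinvD, Cbig, combS_mul_blockDiagonal', combS_mul_transpose,
      ← Finset.sum_add_distrib]
    exact Finset.sum_congr rfl fun i _ =>
      group_sandwich A12 A12' A22 A12'' A22' hA22sym hA22'sym i
  have hS : A11 - Cbig A12 A12' * ⅟(Dbig A22 A12'' A22') * (Cbig A12 A12')ᵀ
      = A11 - ∑ i, ∑ j, A12' i j * (A22' i j)⁻¹ * (A12' i j)ᵀ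
          - ∑ i, H12 A12 A12' A12'' A22' i * (H22 A22 A12'' A22' i)⁻¹ *
              (H12 A12 A12' A12'' A22' i)ᵀ := by
    rw [hsand, sub_add_eq_sub_sub]
  refine ⟨?_, ?_⟩
  · rw [← hS]
    exact isUnit_det_of_invertible _
  · rw [split A11 A12 A12' A22 A12'' A22', ← invOf_eq_nonsing_inv,
      Matrix.invOf_fromBlocks₂₂_eq]
    have hsub : ∀ (W : Matrix (Fin p) (Fin p) ℝ)
        (X : Matrix (Fin p) (Σ i : Fin m, Fin q₁ ⊕ (Fin (n i) × Fin q₂)) ℝ)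
        (Y : Matrix (Σ i : Fin m, Fin q₁ ⊕ (Fin (n i) × Fin q₂)) (Fin p) ℝ)
        (Z : Matrix (Σ i : Fin m, Fin q₁ ⊕ (Fin (n i) × Fin q₂))
          (Σ i : Fin m, Fin q₁ ⊕ (Fin (n i) × Fin q₂)) ℝ),
        (fromBlocks W X Y Z).submatrix Sum.inl Sum.inl = W := fun _ _ _ _ => rfl
    rw [hsub, invOf_eq_nonsing_inv, hS]
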